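/- Let N ≥ 1 be an integer and let p > 1 be real. Define a(ξ) = (1 + |ξ|²)^{(p−2)/2}·ξ for ξ ∈ ℝ^N. Then a is Fréchet differentiable at every ξ ∈ ℝ^N and its derivative satisfies, for all ξ, y ∈ ℝ^N: ⟨Da(ξ)y, y⟩ ≥ min{1, p−1}·(1 + |ξ|²)^{(p−2)/2}·|y|², and ‖Da(ξ)‖ ≤ max{1, p−1}·(1 + |ξ|²)^{(p−2)/2}, where ‖·‖ is the operator norm. -/

import Mathlib

open scoped RealInnerProductSpace

set_option maxHeartbeats 1000000

/-- The map `a(ξ) = (1 + |ξ|²)^((p-2)/2)ξ` generating the generalized `p`-mean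
curvature operator is Fréchet differentiable at every `ξ`, with
`⟨Da(ξ)y, y⟩ ≥ min{1, p-1}·(1 + |ξ|²)^((p-2)/2)·|y|²` and
`‖Da(ξ)‖ ≤ max{1, p-1}·(1 + |ξ|²)^((p-2)/2)`. -/
theorem p_mean_curvature_structure_conditions
    {N : ℕ} (hN : 1 ≤ N) (p : ℝ) (hp : 1 < p)
    (a : EuclideanSpace ℝ (Fin N) → EuclideanSpace ℝ (Fin N))
    (ha : ∀ ξ : EuclideanSpace ℝ (Fin N),
      a ξ = ((1 + ‖ξ‖ ^ 2) ^ ((p - 2) / 2)) • ξ) :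
    ∀ ξ : EuclideanSpace ℝ (Fin N),
      ∃ Da : EuclideanSpace ℝ (Fin N) →L[ℝ] EuclideanSpace ℝ (Fin N),
        HasFDerivAt a Da ξ ∧
        (∀ y : EuclideanSpace ℝ (Fin N),
          min 1 (p - 1) * (1 + ‖ξ‖ ^ 2) ^ ((p - 2) / 2) * ‖y‖ ^ 2 ≤ ⟪Da y, y⟫) ∧
        ‖Da‖ ≤ max 1 (p - 1) * (1 + ‖ξ‖ ^ 2) ^ ((p - 2) / 2) := by
  intro ξ
  let E := EuclideanSpace ℝ (Fin N)
  set s : ℝ := ‖ξ‖ ^ 2 with hs_def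
  have hs0 : 0 ≤ s := sq_nonneg _
  have h1s : (0:ℝ) < 1 + s := by positivity
  set A : ℝ := (1 + s) ^ ((p - 2) / 2 - 1) with hA_def
  have hA0 : 0 < A := Real.rpow_pos_of_pos h1s _
  set g : ℝ := (1 + s) ^ ((p - 2) / 2) with hg_def
  have hg0 : 0 < g := Real.rpow_pos_of_pos h1s _
  have hgA : g = A * (1 + s) := by
    rw [hg_def, hA_def, ← Real.rpow_add_one h1s.ne']
    ring_nf
  set d : ℝ := (p - 2) / 2 * A with hd_def
  set Da : E →L[ℝ] E :=
    g • ContinuousLinearMap.id ℝ E + (d • (2 • innerSL ℝ ξ)).smulRight ξ with hDa_def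
  have hDa_apply : ∀ y : E, Da y = g • y + (d * (2 * ⟪ξ, y⟫)) • ξ := by
    intro y
    simp only [hDa_def, ContinuousLinearMap.add_apply, ContinuousLinearMap.smul_apply,
      ContinuousLinearMap.id_apply, ContinuousLinearMap.smulRight_apply, innerSL_apply_apply,
      smul_smul, smul_eq_mul, nsmul_eq_mul, Nat.cast_ofNat]
  -- differentiability
  have hderiv : HasFDerivAt a Da ξ := by
    have hsq : HasFDerivAt (fun x : E => 1 + ‖x‖ ^ 2) (2 • innerSL ℝ ξ) ξ :=
      (hasStrictFDerivAt_norm_sq ξ).hasFDerivAt.const_add 1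
    have hr : HasDerivAt (fun t : ℝ => t ^ ((p - 2) / 2))
        ((p - 2) / 2 * (1 + s) ^ ((p - 2) / 2 - 1)) (1 + s) := by
      simpa [mul_comm] using Real.hasDerivAt_rpow_const (p := (p - 2) / 2) (Or.inl h1s.ne')
    have hφ : HasFDerivAt (fun x : E => (1 + ‖x‖ ^ 2) ^ ((p - 2) / 2))
        (d • (2 • innerSL ℝ ξ)) ξ := by
      have := hr.comp_hasFDerivAt ξ hsq
      simpa [Function.comp_def, hd_def, hA_def] using this
    have hmain : HasFDerivAt (fun x : E => ((1 + ‖x‖ ^ 2) ^ ((p - 2) / 2)) • x) Da ξ := by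
      exact hφ.smul (hasFDerivAt_id ξ)
    have : a = fun x : E => ((1 + ‖x‖ ^ 2) ^ ((p - 2) / 2)) • x := funext ha
    rw [this]
    exact hmain
  refine ⟨Da, hderiv, ?_, ?_⟩
  · intro y
    have hCS : ⟪ξ, y⟫ ^ 2 ≤ s * ‖y‖ ^ 2 := by
      have := abs_real_inner_le_norm ξ y
      nlinarith [abs_nonneg ⟪ξ, y⟫, sq_abs ⟪ξ, y⟫]
    have hinner : ⟪Da y, y⟫ = g * ‖y‖ ^ 2 + (p - 2) * A * ⟪ξ, y⟫ ^ 2 := by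
      rw [hDa_apply y]
      rw [inner_add_left, real_inner_smul_left, real_inner_smul_left,
        real_inner_self_eq_norm_sq]
      rw [hd_def]
      ring_nf
    rw [hinner]
    have hx1 : 0 ≤ (1 + s) * ‖y‖ ^ 2 - ⟪ξ, y⟫ ^ 2 := by
      nlinarith [hCS, sq_nonneg ‖y‖]
    rcases le_or_gt 2 p with h2 | h2
    · have hmin : min 1 (p - 1) = 1 := min_eq_left (by linarith)
      rw [hmin]
      nlinarith [mul_nonneg (mul_nonneg (show (0:ℝ) ≤ p - 2 by linarith) hA0.le)
        (sq_nonneg ⟪ξ, y⟫)]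
    · have hmin : min 1 (p - 1) = p - 1 := min_eq_right (by linarith)
      rw [hmin, hgA]
      nlinarith [mul_nonneg (mul_nonneg (show (0:ℝ) ≤ 2 - p by linarith) hA0.le) hx1]
  · have hM0 : 0 ≤ max 1 (p - 1) * g := by positivity
    refine ContinuousLinearMap.opNorm_le_bound Da hM0 fun y => ?_
    have hCS : ⟪ξ, y⟫ ^ 2 ≤ s * ‖y‖ ^ 2 := by
      have := abs_real_inner_le_norm ξ y
      nlinarith [abs_nonneg ⟪ξ, y⟫, sq_abs ⟪ξ, y⟫]
    obtain ⟨t, ht_def⟩ : ∃ t : ℝ, ⟪ξ, y⟫ = t := ⟨_, rfl⟩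
    rw [ht_def] at hCS
    have hnsq : ‖Da y‖ ^ 2
        = g ^ 2 * ‖y‖ ^ 2 + 4 * g * d * t ^ 2 + 4 * d ^ 2 * t ^ 2 * s := by
      rw [← real_inner_self_eq_norm_sq, hDa_apply y]
      rw [real_inner_add_add_self, real_inner_smul_left, real_inner_smul_right,
        real_inner_smul_left, real_inner_smul_right, real_inner_smul_left,
        real_inner_smul_right, real_inner_self_eq_norm_sq, real_inner_self_eq_norm_sq,
        ← hs_def]
      rw [show (inner ℝ y ξ : ℝ) = t from by rw [real_inner_comm]; exact ht_def, ht_def]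
      ring
    have key : ‖Da y‖ ^ 2 ≤ (max 1 (p - 1) * g * ‖y‖) ^ 2 := by
      have hx1 : 0 ≤ (1 + s) * ‖y‖ ^ 2 - t ^ 2 := by
        nlinarith [hCS, sq_nonneg ‖y‖]
      have hx2 : 0 ≤ (1 + s) ^ 2 * ‖y‖ ^ 2 - t ^ 2 * s := by
        nlinarith [mul_le_mul_of_nonneg_right hCS hs0, hs0, sq_nonneg ‖y‖,
          mul_nonneg hs0 (sq_nonneg ‖y‖)]
      rcases le_or_gt 2 p with h2 | h2
      · have hmax : max 1 (p - 1) = p - 1 := max_eq_right (by linarith)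
        rw [hmax, hnsq, hd_def, hgA]
        nlinarith [mul_nonneg (mul_nonneg (mul_nonneg (show (0:ℝ) ≤ p - 2 by linarith)
            (sq_nonneg A)) h1s.le) hx1,
          mul_nonneg (mul_nonneg (mul_nonneg (show (0:ℝ) ≤ p - 2 by linarith)
            (show (0:ℝ) ≤ p - 2 by linarith)) (sq_nonneg A)) hx2]
      · have hmax : max 1 (p - 1) = 1 := max_eq_left (by linarith)
        rw [hmax, hnsq, hd_def, hgA]
        nlinarith [mul_nonneg (mul_nonneg (mul_nonneg (show (0:ℝ) ≤ 2 - p by linarith)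
            (sq_nonneg A)) (sq_nonneg t))
          (show (0:ℝ) ≤ 2 + p * s by nlinarith [mul_nonneg (by linarith : (0:ℝ) ≤ p) hs0])]
    have hnn : 0 ≤ max 1 (p - 1) * g * ‖y‖ := by positivity
    calc ‖Da y‖ = Real.sqrt (‖Da y‖ ^ 2) := (Real.sqrt_sq (norm_nonneg _)).symm
      _ ≤ Real.sqrt ((max 1 (p - 1) * g * ‖y‖) ^ 2) := Real.sqrt_le_sqrt key
      _ = max 1 (p - 1) * g * ‖y‖ := Real.sqrt_sq hnn
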